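/- Suppose λ(β) > 0. Then the set E = {x ∈ (0,1] : limsup_{n→∞} (−log_β |I_n(x)|)/n = 1 + λ(β)} is dense in [0,1]; i.e. the closure of E equals [0,1]. -/

import Mathlib

open MeasureTheory Filter Set

noncomputable section

/-- The β-transformation on `(0,1]`: `T_β x = βx − ⌈βx⌉ + 1`. -/
def Tbeta (β x : ℝ) : ℝ := β * x - ⌈β * x⌉ + 1

/-- The digits of the β-expansion, 0-indexed: `eps β x n` is the `(n+1)`-st digit
`ε_{n+1}(x,β) = ⌈β T_β^n x⌉ − 1`. -/
def eps (β x : ℝ) (n : ℕ) : ℤ := ⌈β * (Tbeta β)^[n] x⌉ - 1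

/-- The basic interval of order `n` containing `x`:
all `y ∈ (0,1]` whose first `n` digits agree with those of `x`. -/
def In (β x : ℝ) (n : ℕ) : Set ℝ := {y ∈ Ioc (0:ℝ) 1 | ∀ j < n, eps β y j = eps β x j}

/-- The length of a set (Lebesgue measure). -/
def len (s : Set ℝ) : ℝ := (volume s).toReal

/-- `tseq β n = t_n`: the maximal length of the block of zero digits of the
β-expansion of `1` immediately following position `n` (digits `ε*_{n+1},…,ε*_{n+k}`). -/
def tseq (β : ℝ) (n : ℕ) : ℕ := sSup {k : ℕ | ∀ j < k, eps β 1 (n + j) = 0}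

/-- `Gam β n = Γ_n = max_{1 ≤ k ≤ n} t_k`. -/
def Gam (β : ℝ) (n : ℕ) : ℕ := Finset.sup (Finset.Icc 1 n) (tseq β)

/-- `lam β = λ(β) = limsup_n Γ_n / n`. -/
def lam (β : ℝ) : ℝ := Filter.limsup (fun n : ℕ => (Gam β n : ℝ) / n) atTop

/-- `kstar β x n = k_n^*(x)`: the smallest `k ≥ 0` such that
`(ε_{k+1}(x),…,ε_n(x)) = (ε*_1,…,ε*_{n−k})`. -/
def kstar (β x : ℝ) (n : ℕ) : ℕ := sInf {k : ℕ | ∀ i < n - k, eps β x (k + i) = eps β 1 i}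

/-- `tau β x = τ(x) = limsup_n t_{n − k_n^*(x)} / n`. -/
def tau (β x : ℝ) : ℝ :=
  Filter.limsup (fun n : ℕ => (tseq β (n - kstar β x n) : ℝ) / n) atTop

/-- The upper density `\overline{D}(x) = limsup_n (−log_β |I_n(x)|)/n`. -/
def upperD (β x : ℝ) : ℝ :=
  Filter.limsup (fun n : ℕ => -Real.logb β (len (In β x n)) / n) atTop

/-- The lower density `\underline{D}(x) = liminf_n (−log_β |I_n(x)|)/n`. -/
def lowerD (β x : ℝ) : ℝ :=
  Filter.liminf (fun n : ℕ => -Real.logb β (len (In β x n)) / n) atTop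

/-- The basic interval (cylinder) associated to a finite word `w` of digits:
all `x ∈ (0,1]` whose β-expansion starts with `w`. -/
def cyl (β : ℝ) (w : List ℤ) : Set ℝ :=
  {x ∈ Ioc (0:ℝ) 1 | ∀ j < w.length, eps β x j = w.getD j 0}

/-- A finite word is admissible if it occurs as the initial digits of some `x ∈ (0,1]`. -/
def Admissible (β : ℝ) (w : List ℤ) : Prop := (cyl β w).Nonempty

/-- A basic interval is full if its length is `β^{−n}` where `n` is the order. -/
def IsFull (β : ℝ) (w : List ℤ) : Prop := len (cyl β w) = β ^ (-(w.length : ℤ))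

/-- The word `(ε*_1,…,ε*_n)` of the first `n` digits of the β-expansion of `1`. -/
def estarWord (β : ℝ) (n : ℕ) : List ℤ := (List.range n).map (eps β 1)

/-- The interior of a set relative to the subspace `[0,1]`
(for `S ⊆ [0,1]` this is exactly the interior of `S` in the topology of `[0,1]`). -/
def intIn01 (S : Set ℝ) : Set ℝ := Icc 0 1 \ closure (Icc 0 1 \ S)
section Basics

variable {β : ℝ}

lemma Tbeta_mem (hβ : 1 < β) (x : ℝ) (hx : x ∈ Ioc (0:ℝ) 1) : Tbeta β x ∈ Ioc (0:ℝ) 1 := by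
  have hb0 : 0 < β := lt_trans one_pos hβ
  have h1 : 0 < β * x := mul_pos hb0 hx.1
  constructor
  · have := Int.ceil_lt_add_one (β * x)
    simp only [Tbeta]; linarith
  · have := Int.le_ceil (β * x)
    simp only [Tbeta]; linarith

lemma iter_mem (hβ : 1 < β) (x : ℝ) (hx : x ∈ Ioc (0:ℝ) 1) (n : ℕ) : (Tbeta β)^[n] x ∈ Ioc (0:ℝ) 1 := by
  induction n with
  | zero => simpa
  | succ n ih => rw [Function.iterate_succ_apply']; exact Tbeta_mem hβ _ ih

lemma iter_step (x : ℝ) (n : ℕ) :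
    (Tbeta β)^[n+1] x = β * (Tbeta β)^[n] x - eps β x n := by
  rw [Function.iterate_succ_apply', Tbeta, eps]; push_cast; ring

lemma eps_nonneg (hβ : 1 < β) (x : ℝ) (hx : x ∈ Ioc (0:ℝ) 1) (n : ℕ) : 0 ≤ eps β x n := by
  have hb0 : 0 < β := lt_trans one_pos hβ
  have h1 : 0 < β * (Tbeta β)^[n] x := mul_pos hb0 (iter_mem hβ x hx n).1
  have := Int.ceil_pos.2 h1
  simp only [eps]; omega

lemma eps_le (hβ : 1 < β) (x : ℝ) (hx : x ∈ Ioc (0:ℝ) 1) (n : ℕ) : (eps β x n : ℝ) ≤ β := by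
  have hb0 : 0 < β := lt_trans one_pos hβ
  have h1 : β * (Tbeta β)^[n] x ≤ β := by
    nlinarith [(iter_mem hβ x hx n).2, (iter_mem hβ x hx n).1]
  have h2 : (⌈β * (Tbeta β)^[n] x⌉ : ℝ) < β * (Tbeta β)^[n] x + 1 := Int.ceil_lt_add_one _
  simp only [eps]; push_cast; linarith

/-- key finite-sum identity -/
lemma iter_sum (hβ : 1 < β) (x : ℝ) (m r : ℕ) :
    (Tbeta β)^[m] x =
      (∑ i ∈ Finset.range r, (eps β x (m+i) : ℝ) * (β⁻¹)^(i+1)) + (β⁻¹)^r * (Tbeta β)^[m+r] x := by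
  have hb0 : (β:ℝ) ≠ 0 := ne_of_gt (lt_trans one_pos hβ)
  induction r with
  | zero => simp
  | succ r ih =>
    rw [Finset.sum_range_succ, show m + (r+1) = (m+r)+1 by ring, iter_step]
    rw [ih]
    have hmm : (β⁻¹)^(r+1) * β = (β⁻¹)^r := by rw [pow_succ, mul_assoc, inv_mul_cancel₀ hb0, mul_one]
    linear_combination (-(Tbeta β)^[m+r] x) * hmm

/-- digit-matching comparison: if `r` digits of `z` from position `n` match digits of `ξ`
from position `j`, then the orbit difference propagates. -/
lemma iter_le_of_match (hβ : 1 < β) (z ξ : ℝ) (n j r : ℕ)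
    (hmatch : ∀ i < r, eps β z (n + i) = eps β ξ (j + i))
    (hend : (Tbeta β)^[n+r] z ≤ (Tbeta β)^[j+r] ξ) :
    (Tbeta β)^[n] z ≤ (Tbeta β)^[j] ξ := by
  have h1 := iter_sum hβ z n r
  have h2 := iter_sum hβ ξ j r
  have hpow : (0:ℝ) < (β⁻¹)^r := pow_pos (inv_pos.2 (lt_trans one_pos hβ)) r
  have hsum : (∑ i ∈ Finset.range r, (eps β z (n+i) : ℝ) * (β⁻¹)^(i+1))
      = ∑ i ∈ Finset.range r, (eps β ξ (j+i) : ℝ) * (β⁻¹)^(i+1) := by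
    apply Finset.sum_congr rfl
    intro i hi
    rw [hmatch i (Finset.mem_range.1 hi)]
  rw [h1, h2, hsum]
  nlinarith

end Basics
section Cylinders

variable {β : ℝ}

lemma ceil_eq_one' {r : ℝ} (h0 : 0 < r) (h1 : r ≤ 1) : ⌈r⌉ = 1 := by
  rw [Int.ceil_eq_iff]
  constructor
  · push_cast; linarith
  · exact_mod_cast h1

/-- the left endpoint of the cylinder of order `n` containing `z` -/
def apt (β z : ℝ) (n : ℕ) : ℝ := ∑ i ∈ Finset.range n, (eps β z i : ℝ) * (β⁻¹)^(i+1)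

lemma apt_eq (hβ : 1 < β) (z : ℝ) (n : ℕ) :
    z = apt β z n + (β⁻¹)^n * (Tbeta β)^[n] z := by
  have := iter_sum hβ z 0 n
  simpa [apt] using this

lemma apt_nonneg (hβ : 1 < β) (z : ℝ) (hz : z ∈ Ioc (0:ℝ) 1) (n : ℕ) : 0 ≤ apt β z n := by
  apply Finset.sum_nonneg
  intro i _
  have h1 : (0:ℝ) ≤ eps β z i := by exact_mod_cast eps_nonneg hβ z hz i
  positivity

lemma iter_tail_le (hβ : 1 < β) (z : ℝ) (hz : z ∈ Ioc (0:ℝ) 1) (m r : ℕ) :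
    (β⁻¹)^r * (Tbeta β)^[m+r] z ≤ (Tbeta β)^[m] z := by
  rw [iter_sum hβ z m r]
  have : 0 ≤ ∑ i ∈ Finset.range r, (eps β z (m+i) : ℝ) * (β⁻¹)^(i+1) := by
    apply Finset.sum_nonneg
    intro i _
    have h1 : (0:ℝ) ≤ eps β z (m+i) := by exact_mod_cast eps_nonneg hβ z hz (m+i)
    positivity
  linarith

lemma shift_key (hβ : 1 < β) (y : ℝ) (hy : y ∈ Ioc (0:ℝ) 1) (n : ℕ) (δ : ℝ)
    (h0 : 0 ≤ δ) (hδ : δ < (β⁻¹)^n * (Tbeta β)^[n] y) :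
    ∀ m, m ≤ n → β^m * δ < (Tbeta β)^[m] y := by
  have hb0 : (0:ℝ) < β := lt_trans one_pos hβ
  intro m hm
  have h1 : β^m * δ < β^m * ((β⁻¹)^n * (Tbeta β)^[n] y) := by
    rcases eq_or_lt_of_le h0 with h|h
    · rw [← h]; simpa using mul_pos (by positivity : (0:ℝ) < β^m)
        (mul_pos (by positivity) (iter_mem hβ y hy n).1)
    · exact (mul_lt_mul_iff_right₀ (by positivity)).2 hδ
  have h2 : β^m * ((β⁻¹)^n * (Tbeta β)^[n] y) = (β⁻¹)^(n-m) * (Tbeta β)^[m + (n-m)] y := by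
    rw [show m + (n-m) = n by omega]
    rw [show (β⁻¹)^n = (β⁻¹)^m * (β⁻¹)^(n-m) by rw [← pow_add]; congr 1; omega]
    have hb0' : (β:ℝ) ≠ 0 := ne_of_gt hb0
    have hmm : β^m * (β⁻¹)^m = 1 := by rw [← mul_pow, mul_inv_cancel₀ hb0', one_pow]
    linear_combination ((β⁻¹)^(n-m) * (Tbeta β)^[n] y) * hmm
  calc β^m * δ < β^m * ((β⁻¹)^n * (Tbeta β)^[n] y) := h1
  _ = (β⁻¹)^(n-m) * (Tbeta β)^[m + (n-m)] y := h2
  _ ≤ (Tbeta β)^[m] y := iter_tail_le hβ y hy m (n-m)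

lemma orbit_shift (hβ : 1 < β) (y : ℝ) (hy : y ∈ Ioc (0:ℝ) 1) (n : ℕ) (δ : ℝ)
    (h0 : 0 ≤ δ) (hδ : δ < (β⁻¹)^n * (Tbeta β)^[n] y) :
    ∀ m, m ≤ n → (Tbeta β)^[m] (y - δ) = (Tbeta β)^[m] y - β^m * δ := by
  have hb0 : (0:ℝ) < β := lt_trans one_pos hβ
  have key := shift_key hβ y hy n δ h0 hδ
  intro m
  induction m with
  | zero => intro _; simp
  | succ m ih =>
    intro hm1
    have hm : m ≤ n := by omega
    have horb := ih hm
    have hy1 : β * (Tbeta β)^[m] y = (eps β y m : ℝ) + (Tbeta β)^[m+1] y := by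
      have := iter_step (β := β) y m; linarith
    have hr : β * (Tbeta β)^[m] (y - δ) =
        (eps β y m : ℝ) + ((Tbeta β)^[m+1] y - β^(m+1) * δ) := by
      rw [horb, mul_sub, hy1]; ring
    have hpos : 0 < (Tbeta β)^[m+1] y - β^(m+1) * δ := by
      have := key (m+1) hm1; linarith
    have hle : (Tbeta β)^[m+1] y - β^(m+1) * δ ≤ 1 := by
      have h2 := (iter_mem hβ y hy (m+1)).2
      have h3 : 0 ≤ β^(m+1) * δ := by positivity
      linarith
    have hceil : ⌈β * (Tbeta β)^[m] (y - δ)⌉ = eps β y m + 1 := by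
      rw [hr, add_comm, Int.ceil_add_intCast, ceil_eq_one' hpos hle]; ring
    rw [Function.iterate_succ_apply', Tbeta, hceil, hr]
    push_cast; ring

lemma eps_shift (hβ : 1 < β) (y : ℝ) (hy : y ∈ Ioc (0:ℝ) 1) (n : ℕ) (δ : ℝ)
    (h0 : 0 ≤ δ) (hδ : δ < (β⁻¹)^n * (Tbeta β)^[n] y) (m : ℕ) (hm : m < n) :
    eps β (y - δ) m = eps β y m := by
  have hb0 : (0:ℝ) < β := lt_trans one_pos hβ
  have key := shift_key hβ y hy n δ h0 hδ
  have horb := orbit_shift hβ y hy n δ h0 hδ m (le_of_lt hm)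
  have hy1 : β * (Tbeta β)^[m] y = (eps β y m : ℝ) + (Tbeta β)^[m+1] y := by
    have := iter_step (β := β) y m; linarith
  have hr : β * (Tbeta β)^[m] (y - δ) =
      (eps β y m : ℝ) + ((Tbeta β)^[m+1] y - β^(m+1) * δ) := by
    rw [horb, mul_sub, hy1]; ring
  have hpos : 0 < (Tbeta β)^[m+1] y - β^(m+1) * δ := by
    have := key (m+1) (by omega); linarith
  have hle : (Tbeta β)^[m+1] y - β^(m+1) * δ ≤ 1 := by
    have h2 := (iter_mem hβ y hy (m+1)).2
    have h3 : 0 ≤ β^(m+1) * δ := by positivity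
    linarith
  have hceil : ⌈β * (Tbeta β)^[m] (y - δ)⌉ = eps β y m + 1 := by
    rw [hr, add_comm, Int.ceil_add_intCast, ceil_eq_one' hpos hle]; ring
  simp only [eps]
  rw [hceil]
  simp only [eps]
  ring

/-- the lower inclusion: `(aₙ, y] ⊆ Iₙ(y)` -/
lemma Ioc_subset_In (hβ : 1 < β) (y : ℝ) (hy : y ∈ Ioc (0:ℝ) 1) (n : ℕ) :
    Ioc (apt β y n) y ⊆ In β y n := by
  intro z hz
  have hapt := apt_eq hβ y n
  have hδpos : y - z < (β⁻¹)^n * (Tbeta β)^[n] y := by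
    have := hz.1; linarith
  have h0 : 0 ≤ y - z := by linarith [hz.2]
  have hz' : z = y - (y - z) := by ring
  refine ⟨⟨?_, le_trans hz.2 hy.2⟩, ?_⟩
  · calc (0:ℝ) ≤ apt β y n := apt_nonneg hβ y hy n
    _ < z := hz.1
  · intro j hj
    rw [hz']
    exact eps_shift hβ y hy n (y - z) h0 hδpos j hj

/-- the upper inclusion -/
lemma In_subset_Ioc (hβ : 1 < β) (y : ℝ) (n : ℕ) (c : ℝ)
    (hc : ∀ z ∈ In β y n, (Tbeta β)^[n] z ≤ c) :
    In β y n ⊆ Ioc (apt β y n) (apt β y n + (β⁻¹)^n * c) := by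
  intro z hz
  obtain ⟨hz1, hz2⟩ := hz
  have haz : apt β z n = apt β y n := by
    apply Finset.sum_congr rfl
    intro i hi
    rw [hz2 i (Finset.mem_range.1 hi)]
  have h1 := apt_eq hβ z n
  have hpos : 0 < (β⁻¹)^n * (Tbeta β)^[n] z := by
    have h2 := (iter_mem hβ z hz1 n).1
    positivity
  have h2 : (β⁻¹)^n * (Tbeta β)^[n] z ≤ (β⁻¹)^n * c := by
    apply mul_le_mul_of_nonneg_left (hc z ⟨hz1, hz2⟩) (by positivity)
  constructor
  · rw [h1, haz]; linarith
  · rw [h1, haz]; linarith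

end Cylinders
section Tseq

variable {β : ℝ}

lemma one_mem : (1:ℝ) ∈ Ioc (0:ℝ) 1 := by norm_num

lemma eps_one_zero_iff (hβ : 1 < β) (m : ℕ) :
    eps β 1 m = 0 ↔ (Tbeta β)^[m] 1 ≤ β⁻¹ := by
  have hb0 : (0:ℝ) < β := lt_trans one_pos hβ
  have hT := iter_mem hβ 1 one_mem m
  have hpos : 0 < β * (Tbeta β)^[m] 1 := mul_pos hb0 hT.1
  constructor
  · intro h
    have h1 : ⌈β * (Tbeta β)^[m] 1⌉ = 1 := by simp only [eps] at h; omega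
    have h2 : β * (Tbeta β)^[m] 1 ≤ 1 := by
      have := Int.le_ceil (β * (Tbeta β)^[m] 1); rw [h1] at this; exact_mod_cast this
    by_contra hc
    push_neg at hc
    have h3 := mul_lt_mul_of_pos_left hc hb0
    rw [mul_inv_cancel₀ (ne_of_gt hb0)] at h3
    linarith
  · intro h
    have h2 : β * (Tbeta β)^[m] 1 ≤ 1 := by
      calc β * (Tbeta β)^[m] 1 ≤ β * β⁻¹ := by
            exact mul_le_mul_of_nonneg_left h (le_of_lt hb0)
      _ = 1 := by field_simp
    have := ceil_eq_one' hpos h2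
    simp only [eps]; omega

lemma eps_one_ne_zero (hβ : 1 < β) (m : ℕ) (h : eps β 1 m ≠ 0) :
    β⁻¹ < (Tbeta β)^[m] 1 := by
  by_contra hc
  exact h ((eps_one_zero_iff hβ m).2 (not_lt.1 hc))

lemma zero_run (hβ : 1 < β) (x : ℝ) (m k : ℕ) (h : ∀ j < k, eps β x (m+j) = 0) :
    (Tbeta β)^[m+k] x = β^k * (Tbeta β)^[m] x := by
  induction k with
  | zero => simp
  | succ k ih =>
    have h1 : (Tbeta β)^[m+(k+1)] x = β * (Tbeta β)^[m+k] x - eps β x (m+k) := by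
      rw [show m+(k+1) = (m+k)+1 by ring]; exact iter_step x (m+k)
    rw [h1, h k (by omega), ih (fun j hj => h j (by omega))]
    push_cast; ring

lemma tseq_bddAbove (hβ : 1 < β) (n : ℕ) :
    BddAbove {k : ℕ | ∀ j < k, eps β 1 (n + j) = 0} := by
  have hb0 : (0:ℝ) < β := lt_trans one_pos hβ
  have hT := iter_mem hβ 1 one_mem n
  obtain ⟨j₀, hj₀⟩ := pow_unbounded_of_one_lt ((Tbeta β)^[n] 1)⁻¹ hβ
  refine ⟨j₀, ?_⟩
  intro k hk
  by_contra hc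
  push_neg at hc
  have hz : ∀ j < j₀, eps β 1 (n+j) = 0 := fun j hj => hk j (by omega)
  have h1 : (Tbeta β)^[n+j₀] 1 = β^j₀ * (Tbeta β)^[n] 1 := zero_run hβ 1 n j₀ hz
  have h2 : (Tbeta β)^[n+j₀] 1 ≤ 1 := (iter_mem hβ 1 one_mem (n+j₀)).2
  have h3 : 1 < β^j₀ * (Tbeta β)^[n] 1 := by
    have h4 := mul_lt_mul_of_pos_right hj₀ hT.1
    rw [inv_mul_cancel₀ (ne_of_gt hT.1)] at h4
    linarith
  linarith [h1 ▸ h2]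

lemma tseq_zeros (hβ : 1 < β) (n : ℕ) : ∀ j < tseq β n, eps β 1 (n + j) = 0 := by
  have hne : ({k : ℕ | ∀ j < k, eps β 1 (n + j) = 0}).Nonempty := ⟨0, by simp⟩
  exact Nat.sSup_mem hne (tseq_bddAbove hβ n)

lemma tseq_max (hβ : 1 < β) (n k : ℕ) (h : ∀ j < k, eps β 1 (n + j) = 0) :
    k ≤ tseq β n := le_csSup (tseq_bddAbove hβ n) h

lemma tseq_nonzero (hβ : 1 < β) (n : ℕ) : eps β 1 (n + tseq β n) ≠ 0 := by
  intro hc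
  have h : ∀ j < tseq β n + 1, eps β 1 (n + j) = 0 := by
    intro j hj
    rcases Nat.lt_or_ge j (tseq β n) with h'|h'
    · exact tseq_zeros hβ n j h'
    · have : j = tseq β n := by omega
      rw [this]; exact hc
  have := tseq_max hβ n _ h
  omega

lemma T1_le (hβ : 1 < β) (n : ℕ) : (Tbeta β)^[n] 1 ≤ (β⁻¹)^(tseq β n) := by
  have hb0 : (0:ℝ) < β := lt_trans one_pos hβ
  have h1 : (Tbeta β)^[n + tseq β n] 1 = β^(tseq β n) * (Tbeta β)^[n] 1 :=
    zero_run hβ 1 n (tseq β n) (tseq_zeros hβ n)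
  have h2 : (Tbeta β)^[n + tseq β n] 1 ≤ 1 := (iter_mem hβ 1 one_mem (n + tseq β n)).2
  rw [h1] at h2
  have h3 : (0:ℝ) < β^(tseq β n) := by positivity
  rw [inv_pow]
  by_contra hc
  push_neg at hc
  have h4 := mul_lt_mul_of_pos_left hc h3
  rw [mul_inv_cancel₀ (ne_of_gt h3)] at h4
  linarith

lemma T1_gt (hβ : 1 < β) (n : ℕ) : (β⁻¹)^(tseq β n + 1) < (Tbeta β)^[n] 1 := by
  have hb0 : (0:ℝ) < β := lt_trans one_pos hβ
  have h1 : (Tbeta β)^[n + tseq β n] 1 = β^(tseq β n) * (Tbeta β)^[n] 1 :=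
    zero_run hβ 1 n (tseq β n) (tseq_zeros hβ n)
  have h2 : β⁻¹ < (Tbeta β)^[n + tseq β n] 1 :=
    eps_one_ne_zero hβ _ (tseq_nonzero hβ n)
  rw [h1] at h2
  have h3 : (0:ℝ) < β^(tseq β n) := by positivity
  have h4 : (β⁻¹)^(tseq β n + 1) * (β^(tseq β n) * β) = 1 := by
    rw [inv_pow, ← pow_succ]
    field_simp
  by_contra hc
  push_neg at hc
  have h5 := mul_le_mul_of_nonneg_left hc (le_of_lt (show (0:ℝ) < β^(tseq β n) * β by positivity))
  have h6 := mul_lt_mul_of_pos_left h2 hb0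
  rw [mul_inv_cancel₀ (ne_of_gt hb0)] at h6
  nlinarith

lemma eps_one_zero_ge_one (hβ : 1 < β) : 1 ≤ eps β 1 0 := by
  have h1 : (1:ℤ) < ⌈β * (Tbeta β)^[0] 1⌉ := by
    rw [Int.lt_ceil]
    simpa using hβ
  simp only [eps]; omega

end Tseq
section Limsup

lemma limsup_facts (u : ℕ → ℝ) (c : ℝ) (hc : Filter.limsup u atTop = c)
    (hne : ∃ a : ℝ, ∀ᶠ n in atTop, u n ≤ a) (hlb : ∀ n, 0 ≤ u n) :
    (∀ ε : ℝ, 0 < ε → ∃ a : ℝ, a ≤ c + ε ∧ ∀ᶠ n in atTop, u n ≤ a) ∧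
    (∀ a : ℝ, a < c → ∃ᶠ n in atTop, a < u n) := by
  set S : Set ℝ := {a | ∀ᶠ n in atTop, u n ≤ a} with hS
  have hSne : S.Nonempty := hne
  have hbdd : BddBelow S := by
    refine ⟨0, ?_⟩
    intro a ha
    obtain ⟨n, hn⟩ := (ha.and (Filter.Eventually.of_forall hlb)).exists
    linarith [hn.1, hn.2]
  have hinf : sInf S = c := by rw [← hc, Filter.limsup_eq]
  constructor
  · intro ε hε
    by_contra h
    push_neg at h
    have : c + ε ≤ sInf S := by
      apply le_csInf hSne
      intro a ha
      by_contra h2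
      push_neg at h2
      exact absurd ha (by
        intro hmem
        exact absurd hmem ((fun hm => (h a (le_of_lt h2)) (Filter.Eventually.mono hm (fun n hn => not_lt.2 hn)))))
    rw [hinf] at this; linarith
  · intro a ha
    have hnotin : a ∉ S := by
      intro hmem
      have := csInf_le hbdd hmem
      rw [hinf] at this; linarith
    rw [hS, Set.mem_setOf_eq] at hnotin
    rw [Filter.not_eventually] at hnotin
    apply hnotin.mono
    intro n hn
    push_neg at hn
    exact hn

lemma limsup_eq_of (u : ℕ → ℝ) (c : ℝ)
    (h1 : ∀ ε : ℝ, 0 < ε → ∀ᶠ n in atTop, u n ≤ c + ε)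
    (h2 : ∀ ε : ℝ, 0 < ε → ∃ᶠ n in atTop, c - ε ≤ u n) :
    Filter.limsup u atTop = c := by
  set S : Set ℝ := {a | ∀ᶠ n in atTop, u n ≤ a} with hS
  have hbdd : BddBelow S := by
    refine ⟨c - 1, ?_⟩
    intro a ha
    obtain ⟨n, hn⟩ := ((h2 1 one_pos).and_eventually ha).exists
    linarith [hn.1, hn.2]
  rw [Filter.limsup_eq]
  apply le_antisymm
  · apply le_of_forall_pos_le_add
    intro ε hε
    exact csInf_le hbdd (h1 ε hε)
  · apply le_csInf ⟨c + 1, h1 1 one_pos⟩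
    intro a ha
    by_contra hac
    push_neg at hac
    have hε : 0 < (c - a) / 2 := by linarith
    obtain ⟨n, hn⟩ := ((h2 _ hε).and_eventually ha).exists
    have := hn.1
    have := hn.2
    linarith

end Limsup

section LamFacts

variable {β : ℝ}

lemma tseq_le_Gam (β : ℝ) (k : ℕ) (hk : 1 ≤ k) : tseq β k ≤ Gam β k :=
  Finset.le_sup (Finset.mem_Icc.2 ⟨hk, le_refl k⟩)

lemma lam_ne : ∀ {β : ℝ}, 0 < lam β →
    ∃ a : ℝ, ∀ᶠ n in atTop, (Gam β n : ℝ) / n ≤ a := by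
  intro β hlam
  by_contra h
  push_neg at h
  have hS : {a : ℝ | ∀ᶠ n in atTop, (Gam β n : ℝ) / n ≤ a} = ∅ := by
    ext a; simp only [Set.mem_setOf_eq, Set.mem_empty_iff_false, iff_false]
    intro hmem
    exact (h a) (Filter.Eventually.mono hmem (fun n hn => not_lt.2 hn))
  have : lam β = 0 := by
    rw [lam, Filter.limsup_eq, hS, Real.sInf_empty]
  rw [this] at hlam; exact lt_irrefl 0 hlam

lemma ht_small (hβ : 1 < β) (hlam : 0 < lam β) :
    ∀ ε : ℝ, 0 < ε → ∃ R : ℕ, ∀ k ≥ R, (tseq β k : ℝ) ≤ (lam β + ε) * k := by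
  intro ε hε
  obtain ⟨h1, _⟩ := limsup_facts (fun n => (Gam β n : ℝ) / n) (lam β) rfl (lam_ne hlam)
    (fun n => by positivity)
  obtain ⟨a, ha1, ha2⟩ := h1 ε hε
  rw [Filter.eventually_atTop] at ha2
  obtain ⟨R, hR⟩ := ha2
  refine ⟨max R 1, ?_⟩
  intro k hk
  have hk1 : 1 ≤ k := le_trans (le_max_right R 1) hk
  have hkR : R ≤ k := le_trans (le_max_left R 1) hk
  have h2 := hR k hkR
  have hk0 : (0:ℝ) < k := by exact_mod_cast hk1
  have h3 : (Gam β k : ℝ) ≤ a * k := by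
    rw [div_le_iff₀ hk0] at h2; exact h2
  have h4 : (tseq β k : ℝ) ≤ (Gam β k : ℝ) := by
    exact_mod_cast tseq_le_Gam β k hk1
  have h5 : a * k ≤ (lam β + ε) * k := by
    apply mul_le_mul_of_nonneg_right ha1 (le_of_lt hk0)
  linarith

lemma ht_big (hβ : 1 < β) (hlam : 0 < lam β) :
    ∀ M : ℕ, ∀ ε : ℝ, 0 < ε → ∃ m : ℕ, M ≤ m ∧ 1 ≤ m ∧ (lam β - ε) * m ≤ (tseq β m : ℝ) := by
  intro M ε hε
  rcases le_or_gt (lam β) ε with hle|hlt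
  · refine ⟨max M 1, le_max_left _ _, le_max_right _ _, ?_⟩
    have h1 : lam β - ε ≤ 0 := by linarith
    have h2 : (0:ℝ) ≤ (tseq β (max M 1) : ℝ) := by positivity
    nlinarith [show (0:ℝ) ≤ (max M 1 : ℕ) by positivity]
  · -- real case
    obtain ⟨_, h2⟩ := limsup_facts (fun n => (Gam β n : ℝ) / n) (lam β) rfl (lam_ne hlam)
      (fun n => by positivity)
    set a : ℝ := lam β - ε with ha
    have hapos : 0 < a := by rw [ha]; linarith
    have hfreq := h2 a (by rw [ha]; linarith)
    rw [Filter.frequently_atTop] at hfreq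
    -- choose n₀ with a * n₀ > C_M
    set C : ℕ := Finset.sup (Finset.range (M+1)) (tseq β) with hC
    obtain ⟨n₀, hn₀⟩ := exists_nat_gt ((C : ℝ) / a)
    obtain ⟨n, hn1, hn2⟩ := hfreq (max n₀ 1)
    have hn1' : (1:ℕ) ≤ n := le_trans (le_max_right n₀ 1) hn1
    have hnn₀ : n₀ ≤ n := le_trans (le_max_left n₀ 1) hn1
    have hnpos : (0:ℝ) < n := by exact_mod_cast hn1'
    have hGam : (C : ℝ) < (Gam β n : ℝ) := by
      have h3 : a * n₀ ≤ a * n := by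
        apply mul_le_mul_of_nonneg_left _ (le_of_lt hapos)
        exact_mod_cast hnn₀
      have h4 : (C : ℝ) < a * n₀ := by
        rw [div_lt_iff₀ hapos] at hn₀; linarith [hn₀]
      have h5 : a * n < (Gam β n : ℝ) := by
        rw [lt_div_iff₀ hnpos] at hn2; linarith [hn2]
      linarith
    -- the sup is attained
    have hne : (Finset.Icc 1 n).Nonempty := ⟨1, Finset.mem_Icc.2 ⟨le_refl 1, hn1'⟩⟩
    obtain ⟨k, hk1, hk2⟩ := Finset.exists_mem_eq_sup (Finset.Icc 1 n) hne (tseq β)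
    rw [Finset.mem_Icc] at hk1
    have htk : (Gam β n : ℕ) = tseq β k := hk2
    refine ⟨k, ?_, hk1.1, ?_⟩
    · -- k ≥ M : else tseq β k ≤ C < Gam β n = tseq β k
      by_contra hc
      push_neg at hc
      have : tseq β k ≤ C := Finset.le_sup (Finset.mem_range.2 (by omega))
      have : (tseq β k : ℝ) ≤ (C : ℝ) := by exact_mod_cast this
      rw [← htk] at this
      linarith
    · have h5 : a * n < (Gam β n : ℝ) := by
        rw [lt_div_iff₀ hnpos] at hn2; linarith [hn2]
      have h6 : a * k ≤ a * n := by
        apply mul_le_mul_of_nonneg_left _ (le_of_lt hapos)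
        exact_mod_cast hk1.2
      rw [← htk] at *
      show a * (k:ℝ) ≤ (Gam β n : ℝ)
      linarith

end LamFacts
section Tails

variable {β : ℝ}

/-- tail value of a digit sequence -/
def tl (β : ℝ) (d : ℕ → ℤ) (n : ℕ) : ℝ := ∑' i : ℕ, (d (n+i) : ℝ) * (β⁻¹)^(i+1)

variable {d : ℕ → ℤ}

lemma inv_lt_one'' (hβ : 1 < β) : β⁻¹ < 1 := by
  have hb0 : (0:ℝ) < β := lt_trans one_pos hβ
  have h := mul_lt_mul_of_pos_left hβ (inv_pos.2 hb0)
  rwa [inv_mul_cancel₀ (ne_of_gt hb0), mul_one] at h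

lemma tl_summable (hβ : 1 < β) (h0 : ∀ n, 0 ≤ d n) (hb : ∀ n, (d n : ℝ) ≤ β) (n : ℕ) :
    Summable (fun i : ℕ => (d (n+i) : ℝ) * (β⁻¹)^(i+1)) := by
  have hb0 : (0:ℝ) < β := lt_trans one_pos hβ
  apply Summable.of_nonneg_of_le
  · intro i
    have := h0 (n+i)
    have : (0:ℝ) ≤ (d (n+i) : ℝ) := by exact_mod_cast this
    positivity
  · intro i
    show (d (n+i) : ℝ) * (β⁻¹)^(i+1) ≤ (β⁻¹)^i
    have h1 : (d (n+i) : ℝ) * (β⁻¹)^(i+1) ≤ β * (β⁻¹)^(i+1) := by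
      apply mul_le_mul_of_nonneg_right (hb (n+i)) (by positivity)
    have h2 : β * (β⁻¹)^(i+1) = (β⁻¹)^i := by
      rw [pow_succ]
      field_simp
    linarith
  · exact summable_geometric_of_lt_one (by positivity) (inv_lt_one'' hβ)

lemma tl_rec (hβ : 1 < β) (h0 : ∀ n, 0 ≤ d n) (hb : ∀ n, (d n : ℝ) ≤ β) (n : ℕ) :
    tl β d n = β⁻¹ * ((d n : ℝ) + tl β d (n+1)) := by
  have hs := tl_summable hβ h0 hb n
  have h1 := Summable.tsum_eq_zero_add hs
  have h2 : ∀ i : ℕ, (d (n+(i+1)) : ℝ) * (β⁻¹)^(i+1+1)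
      = β⁻¹ * ((d ((n+1)+i) : ℝ) * (β⁻¹)^(i+1)) := by
    intro i
    rw [show n+(i+1) = (n+1)+i by ring]
    ring
  rw [tl, h1]
  simp only [h2]
  rw [tsum_mul_left]
  rw [show (β⁻¹)^(0+1) = β⁻¹ by ring]
  rw [← tl]
  ring

lemma tl_sum (hβ : 1 < β) (h0 : ∀ n, 0 ≤ d n) (hb : ∀ n, (d n : ℝ) ≤ β) (n r : ℕ) :
    tl β d n = (∑ i ∈ Finset.range r, (d (n+i) : ℝ) * (β⁻¹)^(i+1)) + (β⁻¹)^r * tl β d (n+r) := by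
  induction r with
  | zero => simp
  | succ r ih =>
    rw [Finset.sum_range_succ, ih, tl_rec hβ h0 hb (n+r)]
    rw [show n+(r+1) = (n+r)+1 by ring]
    ring

lemma tl_nonneg (h0 : ∀ n, 0 ≤ d n) (hβ : 1 < β) (n : ℕ) : 0 ≤ tl β d n := by
  apply tsum_nonneg
  intro i
  have := h0 (n+i)
  have : (0:ℝ) ≤ (d (n+i) : ℝ) := by exact_mod_cast this
  positivity

lemma tl_crude (hβ : 1 < β) (h0 : ∀ n, 0 ≤ d n) (hb : ∀ n, (d n : ℝ) ≤ β) (n : ℕ) :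
    tl β d n ≤ (1 - β⁻¹)⁻¹ := by
  have hb0 : (0:ℝ) < β := lt_trans one_pos hβ
  have hsum := tsum_geometric_of_lt_one (show (0:ℝ) ≤ β⁻¹ by positivity) (inv_lt_one'' hβ)
  rw [← hsum]
  apply Summable.tsum_le_tsum _ (tl_summable hβ h0 hb n)
    (summable_geometric_of_lt_one (by positivity) (inv_lt_one'' hβ))
  intro i
  have h1 : (d (n+i) : ℝ) * (β⁻¹)^(i+1) ≤ β * (β⁻¹)^(i+1) := by
    apply mul_le_mul_of_nonneg_right (hb (n+i)) (by positivity)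
  have h2 : β * (β⁻¹)^(i+1) = (β⁻¹)^i := by
    rw [pow_succ]; field_simp
  linarith

lemma tl_ge_single (hβ : 1 < β) (h0 : ∀ n, 0 ≤ d n) (hb : ∀ n, (d n : ℝ) ≤ β)
    (n q : ℕ) (hq : n ≤ q) : (d q : ℝ) * (β⁻¹)^(q-n+1) ≤ tl β d n := by
  have h1 := Summable.le_tsum (tl_summable hβ h0 hb n) (q - n) (fun j _ => by
    have := h0 (n+j)
    have : (0:ℝ) ≤ (d (n+j) : ℝ) := by exact_mod_cast this
    positivity)
  rwa [show n + (q - n) = q by omega] at h1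

lemma tl_le_of_match (hβ : 1 < β) (h0 : ∀ n, 0 ≤ d n) (hb : ∀ n, (d n : ℝ) ≤ β)
    (ξ : ℝ) (n j r : ℕ)
    (hm : ∀ i < r, d (n+i) = eps β ξ (j+i))
    (hend : tl β d (n+r) ≤ (Tbeta β)^[j+r] ξ) :
    tl β d n ≤ (Tbeta β)^[j] ξ := by
  rw [tl_sum hβ h0 hb n r, iter_sum hβ ξ j r]
  have hsum : (∑ i ∈ Finset.range r, (d (n+i) : ℝ) * (β⁻¹)^(i+1))
      = ∑ i ∈ Finset.range r, (eps β ξ (j+i) : ℝ) * (β⁻¹)^(i+1) := by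
    apply Finset.sum_congr rfl
    intro i hi
    rw [hm i (Finset.mem_range.1 hi)]
  rw [hsum]
  have hpow : (0:ℝ) < (β⁻¹)^r := by
    have := lt_trans one_pos hβ; positivity
  nlinarith

/-- if all tails are in `(0,1]`, `tl β d 0` is a point of `(0,1]` realising the digits -/
lemma tl_orbit (hβ : 1 < β) (h0 : ∀ n, 0 ≤ d n) (hb : ∀ n, (d n : ℝ) ≤ β)
    (htl : ∀ n, tl β d n ∈ Ioc (0:ℝ) 1) :
    ∀ n, (Tbeta β)^[n] (tl β d 0) = tl β d n := by
  have hb0 : (0:ℝ) < β := lt_trans one_pos hβ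
  intro n
  induction n with
  | zero => simp
  | succ n ih =>
    rw [Function.iterate_succ_apply', ih, Tbeta]
    have h1 : β * tl β d n = (d n : ℝ) + tl β d (n+1) := by
      rw [tl_rec hβ h0 hb n]
      field_simp
    have h2 : ⌈β * tl β d n⌉ = d n + 1 := by
      rw [h1, add_comm, Int.ceil_add_intCast, ceil_eq_one' (htl (n+1)).1 (htl (n+1)).2]
      ring
    rw [h2, h1]
    push_cast; ring

lemma tl_eps (hβ : 1 < β) (h0 : ∀ n, 0 ≤ d n) (hb : ∀ n, (d n : ℝ) ≤ β)
    (htl : ∀ n, tl β d n ∈ Ioc (0:ℝ) 1) :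
    ∀ n, eps β (tl β d 0) n = d n := by
  intro n
  rw [eps, tl_orbit hβ h0 hb htl n]
  have h1 : β * tl β d n = (d n : ℝ) + tl β d (n+1) := by
    rw [tl_rec hβ h0 hb n]
    field_simp
  rw [h1, add_comm, Int.ceil_add_intCast, ceil_eq_one' (htl (n+1)).1 (htl (n+1)).2]
  ring

end Tails
section LenBounds

variable {β : ℝ}

lemma suffix_le (hβ : 1 < β) (z : ℝ) (hz : z ∈ Ioc (0:ℝ) 1) (p k : ℕ)
    (hmatch : ∀ i < k, eps β z (p+i) = eps β 1 i) :
    (Tbeta β)^[p+k] z ≤ (Tbeta β)^[k] 1 := by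
  have hb0 : (0:ℝ) < β := lt_trans one_pos hβ
  induction k with
  | zero => simpa using (iter_mem hβ z hz p).2
  | succ k ih =>
    have ih' := ih (fun i hi => hmatch i (by omega))
    have h1 : (Tbeta β)^[p+(k+1)] z = β * (Tbeta β)^[p+k] z - eps β z (p+k) := by
      rw [show p+(k+1) = (p+k)+1 by ring]; exact iter_step z (p+k)
    have h2 : (Tbeta β)^[k+1] 1 = β * (Tbeta β)^[k] 1 - eps β 1 k := iter_step 1 k
    rw [h1, h2, hmatch k (by omega)]
    have h3 : β * (Tbeta β)^[p+k] z ≤ β * (Tbeta β)^[k] 1 :=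
      mul_le_mul_of_nonneg_left ih' (le_of_lt hb0)
    linarith

lemma vol_In_ne_top (hβ : 1 < β) (y : ℝ) (n : ℕ) : volume (In β y n) ≠ ⊤ := by
  have h1 : In β y n ⊆ Ioc (0:ℝ) 1 := fun z hz => hz.1
  have h2 : volume (In β y n) ≤ volume (Ioc (0:ℝ) 1) := measure_mono h1
  rw [Real.volume_Ioc] at h2
  exact ne_top_of_le_ne_top (by simp) h2

lemma len_In_lower (hβ : 1 < β) (y : ℝ) (hy : y ∈ Ioc (0:ℝ) 1) (n : ℕ) :
    (β⁻¹)^n * (Tbeta β)^[n] y ≤ len (In β y n) := by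
  have h1 := Ioc_subset_In hβ y hy n
  have h2 : volume (Ioc (apt β y n) y) ≤ volume (In β y n) := measure_mono h1
  have h3 : volume (Ioc (apt β y n) y) = ENNReal.ofReal (y - apt β y n) := Real.volume_Ioc
  have h4 : y - apt β y n = (β⁻¹)^n * (Tbeta β)^[n] y := by
    have := apt_eq hβ y n; linarith
  rw [len]
  rw [← ENNReal.ofReal_le_iff_le_toReal (vol_In_ne_top hβ y n)] at *
  calc ENNReal.ofReal ((β⁻¹)^n * (Tbeta β)^[n] y) = volume (Ioc (apt β y n) y) := by
        rw [h3, h4]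
  _ ≤ volume (In β y n) := h2

lemma len_In_upper (hβ : 1 < β) (y : ℝ) (n : ℕ) (c : ℝ) (hc0 : 0 ≤ c)
    (hc : ∀ z ∈ In β y n, (Tbeta β)^[n] z ≤ c) :
    len (In β y n) ≤ (β⁻¹)^n * c := by
  have h1 := In_subset_Ioc hβ y n c hc
  have h2 : volume (In β y n) ≤ volume (Ioc (apt β y n) (apt β y n + (β⁻¹)^n * c)) :=
    measure_mono h1
  rw [Real.volume_Ioc] at h2
  have h3 : apt β y n + (β⁻¹)^n * c - apt β y n = (β⁻¹)^n * c := by ring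
  rw [h3] at h2
  rw [len]
  have h4 := ENNReal.toReal_mono (by simp) h2
  rwa [ENNReal.toReal_ofReal (by positivity)] at h4

lemma logb_inv_pow (hβ : 1 < β) (m : ℕ) : Real.logb β ((β⁻¹)^m) = -(m:ℝ) := by
  have hb0 : (0:ℝ) < β := lt_trans one_pos hβ
  have hlog : Real.log β ≠ 0 := ne_of_gt (Real.log_pos hβ)
  rw [Real.logb, Real.log_pow, Real.log_inv]
  field_simp

lemma neg_logb_mono (hβ : 1 < β) {u v : ℝ} (hu : 0 < u) (huv : u ≤ v) :
    -Real.logb β v ≤ -Real.logb β u := by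
  have := Real.logb_le_logb_of_le hβ hu huv
  linarith

end LenBounds
section Digits

/-- the digit sequence of the constructed point -/
def dig (β x : ℝ) (N : ℕ) (L M : ℕ → ℕ) (n : ℕ) : ℤ :=
  if n < N then eps β x n
  else if n < L 0 then 0
  else if n - L (Nat.findGreatest (fun i => L i ≤ n) n) < M (Nat.findGreatest (fun i => L i ≤ n) n)
    then eps β 1 (n - L (Nat.findGreatest (fun i => L i ≤ n) n)) else 0

variable {β x : ℝ} {N E K : ℕ} {L M : ℕ → ℕ}

lemma L_lt (hLs : ∀ i, L (i+1) = L i + M i + tseq β (M i) + 1 + E) (i : ℕ) :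
    L i < L (i+1) := by rw [hLs]; omega

lemma L_mono (hLs : ∀ i, L (i+1) = L i + M i + tseq β (M i) + 1 + E) :
    ∀ i j, i ≤ j → L i ≤ L j := by
  intro i j hij
  induction j with
  | zero => have : i = 0 := Nat.le_zero.mp hij; rw [this]
  | succ j ih =>
    rcases Nat.lt_or_ge i (j+1) with h|h
    · have := ih (by omega)
      have := L_lt hLs j
      omega
    · have h2 : i = j+1 := by omega
      rw [h2]

lemma L_ge (hLs : ∀ i, L (i+1) = L i + M i + tseq β (M i) + 1 + E) (i : ℕ) :
    L 0 + i ≤ L i := by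
  induction i with
  | zero => omega
  | succ i ih => have := L_lt hLs i; omega

lemma blk_eq (hLs : ∀ i, L (i+1) = L i + M i + tseq β (M i) + 1 + E)
    (i n : ℕ) (h1 : L i ≤ n) (h2 : n < L (i+1)) :
    Nat.findGreatest (fun j => L j ≤ n) n = i := by
  rw [Nat.findGreatest_eq_iff]
  refine ⟨?_, fun _ => h1, ?_⟩
  · calc i ≤ L 0 + i := by omega
    _ ≤ L i := L_ge hLs i
    _ ≤ n := h1
  · intro j hj _
    have : L (i+1) ≤ L j := L_mono hLs (i+1) j (by omega)
    omega

lemma dig_lt_N (hL0 : L 0 = N + K) (j : ℕ) (hj : j < N) :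
    dig β x N L M j = eps β x j := by
  rw [dig, if_pos hj]

lemma dig_zeros1 (hL0 : L 0 = N + K) (j : ℕ) (hj1 : N ≤ j) (hj2 : j < L 0) :
    dig β x N L M j = 0 := by
  rw [dig, if_neg (by omega), if_pos hj2]

lemma dig_estar (hL0 : L 0 = N + K) (hLs : ∀ i, L (i+1) = L i + M i + tseq β (M i) + 1 + E)
    (i r : ℕ) (hr : r < M i) :
    dig β x N L M (L i + r) = eps β 1 r := by
  have hge : L 0 ≤ L i := L_mono hLs 0 i (by omega)
  have hblk : Nat.findGreatest (fun j => L j ≤ L i + r) (L i + r) = i :=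
    blk_eq hLs i (L i + r) (by omega) (by rw [hLs]; omega)
  rw [dig, if_neg (by omega), if_neg (by omega), hblk]
  rw [if_pos (by omega)]
  congr 1
  omega

lemma dig_zeros2 (hL0 : L 0 = N + K) (hLs : ∀ i, L (i+1) = L i + M i + tseq β (M i) + 1 + E)
    (i s : ℕ) (hs1 : M i ≤ s) (hs2 : s < M i + tseq β (M i) + 1 + E) :
    dig β x N L M (L i + s) = 0 := by
  have hge : L 0 ≤ L i := L_mono hLs 0 i (by omega)
  have hblk : Nat.findGreatest (fun j => L j ≤ L i + s) (L i + s) = i :=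
    blk_eq hLs i (L i + s) (by omega) (by rw [hLs]; omega)
  rw [dig, if_neg (by omega), if_neg (by omega), hblk]
  rw [if_neg (by omega)]

lemma dig_cases (hL0 : L 0 = N + K) (hLs : ∀ i, L (i+1) = L i + M i + tseq β (M i) + 1 + E)
    (n : ℕ) (hn : L 0 ≤ n) :
    ∃ i r, n = L i + r ∧ r < M i + tseq β (M i) + 1 + E := by
  set i := Nat.findGreatest (fun j => L j ≤ n) n with hi
  have hP0 : L 0 ≤ n := hn
  have hspec : L i ≤ n :=
    Nat.findGreatest_spec (P := fun j => L j ≤ n) (m := 0) (n := n) (Nat.zero_le n) hP0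
  have hup : n < L (i+1) := by
    by_contra hc
    push_neg at hc
    have hi1n : i + 1 ≤ n := by
      calc i + 1 ≤ L 0 + (i+1) := by omega
      _ ≤ L (i+1) := L_ge hLs (i+1)
      _ ≤ n := hc
    have := Nat.findGreatest_is_greatest (lt_add_one i) hi1n
    exact this hc
  refine ⟨i, n - L i, by omega, ?_⟩
  rw [hLs] at hup
  omega

lemma dig_nonneg (hβ : 1 < β) (hx : x ∈ Ioc (0:ℝ) 1) (n : ℕ) : 0 ≤ dig β x N L M n := by
  rw [dig]
  split
  · exact eps_nonneg hβ x hx n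
  split
  · exact le_refl 0
  split
  · exact eps_nonneg hβ 1 one_mem _
  · exact le_refl 0

lemma dig_le (hβ : 1 < β) (hx : x ∈ Ioc (0:ℝ) 1) (n : ℕ) : (dig β x N L M n : ℝ) ≤ β := by
  have hb0 : (0:ℝ) < β := lt_trans one_pos hβ
  rw [dig]
  split
  · exact eps_le hβ x hx n
  split
  · push_cast; linarith
  split
  · exact eps_le hβ 1 one_mem _
  · push_cast; linarith

end Digits
section TailBounds

variable {β x : ℝ} {N E K : ℕ} {L M : ℕ → ℕ}

lemma tl_pos (hβ : 1 < β) (hx : x ∈ Ioc (0:ℝ) 1)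
    (hL0 : L 0 = N + K) (hLs : ∀ i, L (i+1) = L i + M i + tseq β (M i) + 1 + E)
    (hM2 : ∀ i, 1 ≤ M i) (n : ℕ) :
    0 < tl β (dig β x N L M) n := by
  have hb0 : (0:ℝ) < β := lt_trans one_pos hβ
  have h0 := fun m => dig_nonneg (N := N) (L := L) (M := M) hβ hx m
  have hb := fun m => dig_le (N := N) (L := L) (M := M) hβ hx m
  have hq : n ≤ L n := le_trans (by omega) (L_ge hLs n)
  have hd : dig β x N L M (L n) = eps β 1 0 := by
    have := dig_estar (x := x) hL0 hLs n 0 (by have := hM2 n; omega)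
    simpa using this
  have h1 := tl_ge_single hβ h0 hb n (L n) hq
  rw [hd] at h1
  have h2 : (1:ℝ) ≤ (eps β 1 0 : ℝ) := by exact_mod_cast eps_one_zero_ge_one hβ
  have h3 : (0:ℝ) < (β⁻¹)^(L n - n + 1) := by positivity
  nlinarith

lemma tl_zeros_sum (hβ : 1 < β) (hx : x ∈ Ioc (0:ℝ) 1)
    (n r : ℕ) (hz : ∀ j < r, dig β x N L M (n + j) = 0) :
    tl β (dig β x N L M) n = (β⁻¹)^r * tl β (dig β x N L M) (n + r) := by
  have h0 := fun m => dig_nonneg (N := N) (L := L) (M := M) hβ hx m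
  have hb := fun m => dig_le (N := N) (L := L) (M := M) hβ hx m
  rw [tl_sum hβ h0 hb n r]
  have : ∀ i ∈ Finset.range r, (dig β x N L M (n+i) : ℝ) * (β⁻¹)^(i+1) = 0 := by
    intro i hi
    rw [hz i (Finset.mem_range.1 hi)]
    simp
  rw [Finset.sum_congr rfl this]
  simp

lemma tl_blockend (hβ : 1 < β) (hx : x ∈ Ioc (0:ℝ) 1)
    (hL0 : L 0 = N + K) (hLs : ∀ i, L (i+1) = L i + M i + tseq β (M i) + 1 + E)
    (hE : (1 - β⁻¹)⁻¹ ≤ β^E) (i : ℕ) :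
    tl β (dig β x N L M) (L i + (M i + tseq β (M i))) ≤ β⁻¹ := by
  have hb0 : (0:ℝ) < β := lt_trans one_pos hβ
  have h0 := fun m => dig_nonneg (N := N) (L := L) (M := M) hβ hx m
  have hb := fun m => dig_le (N := N) (L := L) (M := M) hβ hx m
  have hz : ∀ j < 1 + E, dig β x N L M ((L i + (M i + tseq β (M i))) + j) = 0 := by
    intro j hj
    rw [show (L i + (M i + tseq β (M i))) + j = L i + (M i + tseq β (M i) + j) by ring]
    exact dig_zeros2 hL0 hLs i _ (by omega) (by omega)
  have h1 := tl_zeros_sum (L := L) (M := M) hβ hx _ (1+E) hz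
  have h2 : (L i + (M i + tseq β (M i))) + (1 + E) = L (i+1) := by rw [hLs]; ring
  rw [h2] at h1
  have h3 : tl β (dig β x N L M) (L (i+1)) ≤ (1 - β⁻¹)⁻¹ := tl_crude hβ h0 hb _
  have h4 : (β⁻¹)^(1+E) * (1 - β⁻¹)⁻¹ ≤ β⁻¹ := by
    have h5 : (β⁻¹)^(1+E) * (1 - β⁻¹)⁻¹ ≤ (β⁻¹)^(1+E) * β^E :=
      mul_le_mul_of_nonneg_left hE (by positivity)
    have h6 : (β⁻¹)^(1+E) * β^E = β⁻¹ := by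
      rw [pow_add, pow_one, inv_pow]
      field_simp
    linarith
  rw [h1]
  calc (β⁻¹)^(1+E) * tl β (dig β x N L M) (L (i+1)) ≤ (β⁻¹)^(1+E) * (1 - β⁻¹)⁻¹ :=
        mul_le_mul_of_nonneg_left h3 (by positivity)
  _ ≤ β⁻¹ := h4

lemma tl_block (hβ : 1 < β) (hx : x ∈ Ioc (0:ℝ) 1)
    (hL0 : L 0 = N + K) (hLs : ∀ i, L (i+1) = L i + M i + tseq β (M i) + 1 + E)
    (hE : (1 - β⁻¹)⁻¹ ≤ β^E) (i r : ℕ) (hr : r ≤ M i + tseq β (M i)) :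
    tl β (dig β x N L M) (L i + r) ≤ (Tbeta β)^[r] 1 := by
  have h0 := fun m => dig_nonneg (N := N) (L := L) (M := M) hβ hx m
  have hb := fun m => dig_le (N := N) (L := L) (M := M) hβ hx m
  apply tl_le_of_match hβ h0 hb 1 (L i + r) r (M i + tseq β (M i) - r)
  · intro s hs
    rw [show L i + r + s = L i + (r + s) by ring]
    rcases Nat.lt_or_ge (r + s) (M i) with h|h
    · exact dig_estar hL0 hLs i (r+s) h
    · have h1 : dig β x N L M (L i + (r+s)) = 0 :=
        dig_zeros2 hL0 hLs i (r+s) h (by omega)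
      have h2 : eps β 1 (r+s) = 0 := by
        have := tseq_zeros hβ (M i) (r + s - M i) (by omega)
        rwa [show M i + (r + s - M i) = r + s by omega] at this
      rw [h1, h2]
  · rw [show L i + r + (M i + tseq β (M i) - r) = L i + (M i + tseq β (M i)) by omega,
        show r + (M i + tseq β (M i) - r) = M i + tseq β (M i) by omega]
    calc tl β (dig β x N L M) (L i + (M i + tseq β (M i))) ≤ β⁻¹ :=
          tl_blockend hβ hx hL0 hLs hE i
    _ ≤ (Tbeta β)^[M i + tseq β (M i)] 1 :=
          le_of_lt (eps_one_ne_zero hβ _ (tseq_nonzero hβ (M i)))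

lemma tl_blockstart (hβ : 1 < β) (hx : x ∈ Ioc (0:ℝ) 1)
    (hL0 : L 0 = N + K) (hLs : ∀ i, L (i+1) = L i + M i + tseq β (M i) + 1 + E)
    (hE : (1 - β⁻¹)⁻¹ ≤ β^E) (i : ℕ) :
    tl β (dig β x N L M) (L i) ≤ 1 := by
  have := tl_block hβ hx hL0 hLs hE i 0 (by omega)
  simpa using this

lemma tl_N (hβ : 1 < β) (hx : x ∈ Ioc (0:ℝ) 1)
    (hL0 : L 0 = N + K) (hLs : ∀ i, L (i+1) = L i + M i + tseq β (M i) + 1 + E)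
    (hE : (1 - β⁻¹)⁻¹ ≤ β^E) (hK : (β⁻¹)^K ≤ (Tbeta β)^[N] x) :
    tl β (dig β x N L M) N ≤ (Tbeta β)^[N] x := by
  have hb0 : (0:ℝ) < β := lt_trans one_pos hβ
  have hz : ∀ j < K, dig β x N L M (N + j) = 0 := by
    intro j hj
    exact dig_zeros1 hL0 (N+j) (by omega) (by omega)
  have h1 := tl_zeros_sum (L := L) (M := M) hβ hx N K hz
  rw [show N + K = L 0 by omega] at h1
  rw [h1]
  calc (β⁻¹)^K * tl β (dig β x N L M) (L 0)
      ≤ (β⁻¹)^K * 1 := mul_le_mul_of_nonneg_left (tl_blockstart hβ hx hL0 hLs hE 0) (by positivity)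
  _ = (β⁻¹)^K := by ring
  _ ≤ (Tbeta β)^[N] x := hK

lemma tl_le_one (hβ : 1 < β) (hx : x ∈ Ioc (0:ℝ) 1)
    (hL0 : L 0 = N + K) (hLs : ∀ i, L (i+1) = L i + M i + tseq β (M i) + 1 + E)
    (hE : (1 - β⁻¹)⁻¹ ≤ β^E) (hK : (β⁻¹)^K ≤ (Tbeta β)^[N] x) (n : ℕ) :
    tl β (dig β x N L M) n ≤ 1 := by
  have hb0 : (0:ℝ) < β := lt_trans one_pos hβ
  have h0 := fun m => dig_nonneg (N := N) (L := L) (M := M) hβ hx m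
  have hb := fun m => dig_le (N := N) (L := L) (M := M) hβ hx m
  have hpow1 : ∀ m : ℕ, ((β:ℝ)⁻¹)^m ≤ 1 := fun m =>
    pow_le_one₀ (by positivity) (le_of_lt (inv_lt_one'' hβ))
  rcases Nat.lt_or_ge n N with h|h
  · -- prefix region
    have h1 : tl β (dig β x N L M) n ≤ (Tbeta β)^[n] x := by
      apply tl_le_of_match hβ h0 hb x n n (N - n)
      · intro i hi
        rw [show n + i = n + i by rfl]
        exact dig_lt_N hL0 (n+i) (by omega)
      · rw [show n + (N - n) = N by omega]
        exact tl_N hβ hx hL0 hLs hE hK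
    exact le_trans h1 (iter_mem hβ x hx n).2
  rcases Nat.lt_or_ge n (L 0) with h2|h2
  · -- zero region before first block
    have hz : ∀ j < L 0 - n, dig β x N L M (n + j) = 0 := by
      intro j hj
      exact dig_zeros1 hL0 (n+j) (by omega) (by omega)
    have h1 := tl_zeros_sum (L := L) (M := M) hβ hx n (L 0 - n) hz
    rw [show n + (L 0 - n) = L 0 by omega] at h1
    rw [h1]
    calc (β⁻¹)^(L 0 - n) * tl β (dig β x N L M) (L 0)
        ≤ 1 * 1 := mul_le_mul (hpow1 _) (tl_blockstart hβ hx hL0 hLs hE 0)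
            (tl_nonneg h0 hβ _) zero_le_one
    _ = 1 := by ring
  · -- block region
    obtain ⟨i, r, hnir, hrlt⟩ := dig_cases hL0 hLs n h2
    rcases Nat.lt_or_ge (M i + tseq β (M i)) r with h3|h3
    · -- in the final zeros of the block
      have hz : ∀ j < L (i+1) - n, dig β x N L M (n + j) = 0 := by
        intro j hj
        rw [hnir, show L i + r + j = L i + (r + j) by ring]
        apply dig_zeros2 hL0 hLs i (r+j) (by omega)
        have : L (i+1) = L i + M i + tseq β (M i) + 1 + E := hLs i
        omega
      have h1 := tl_zeros_sum (L := L) (M := M) hβ hx n (L (i+1) - n) hz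
      have hnlt : n < L (i+1) := by rw [hLs]; omega
      rw [show n + (L (i+1) - n) = L (i+1) by omega] at h1
      rw [h1]
      calc (β⁻¹)^(L (i+1) - n) * tl β (dig β x N L M) (L (i+1))
          ≤ 1 * 1 := mul_le_mul (hpow1 _) (tl_blockstart hβ hx hL0 hLs hE (i+1))
            (tl_nonneg h0 hβ _) zero_le_one
      _ = 1 := by ring
    · rw [hnir]
      exact le_trans (tl_block hβ hx hL0 hLs hE i r h3) (iter_mem hβ 1 one_mem r).2

end TailBounds
section MainExists

set_option maxHeartbeats 1000000 in
lemma main_exists (β : ℝ) (hβ : 1 < β) (hlam : 0 < lam β)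
    (x : ℝ) (hx : x ∈ Ioc (0:ℝ) 1) (N : ℕ) :
    ∃ y, y ∈ In β x N ∧ y ∈ Ioc (0:ℝ) 1 ∧ upperD β y = 1 + lam β := by
  have hb0 : (0:ℝ) < β := lt_trans one_pos hβ
  -- choose E
  obtain ⟨E, hE'⟩ := pow_unbounded_of_one_lt (1 - β⁻¹)⁻¹ hβ
  have hE : (1 - β⁻¹)⁻¹ ≤ β^E := le_of_lt hE'
  -- choose K
  obtain ⟨K, hK'⟩ := exists_pow_lt_of_lt_one (iter_mem hβ x hx N).1 (inv_lt_one'' hβ)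
  have hK : (β⁻¹)^K ≤ (Tbeta β)^[N] x := le_of_lt hK'
  -- choose the block lengths
  have hc : ∀ i P : ℕ, ∃ m : ℕ, ((i:ℕ)+1) * P + 1 ≤ m ∧ 1 ≤ m ∧
      (lam β - 1/(i+1)) * (m:ℝ) ≤ (tseq β m : ℝ) := by
    intro i P
    obtain ⟨m, h1, h2, h3⟩ := ht_big hβ hlam ((i+1)*P+1) (1/(i+1)) (by positivity)
    exact ⟨m, h1, h2, h3⟩
  choose mf hmf1 hmf2 hmf3 using hc
  have hLM : ∃ L M : ℕ → ℕ, L 0 = N + K ∧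
      (∀ i, L (i+1) = L i + M i + tseq β (M i) + 1 + E) ∧
      (∀ i, (i+1) * L i + 1 ≤ M i) ∧ (∀ i, 1 ≤ M i) ∧
      (∀ i, (lam β - 1/(i+1)) * (M i : ℝ) ≤ (tseq β (M i) : ℝ)) := by
    refine ⟨fun n => Nat.rec (N+K) (fun i Li => Li + mf i Li + tseq β (mf i Li) + 1 + E) n,
      fun i => mf i (Nat.rec (N+K) (fun i Li => Li + mf i Li + tseq β (mf i Li) + 1 + E) i),
      rfl, fun i => rfl, fun i => hmf1 i _, fun i => hmf2 i _, fun i => hmf3 i _⟩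
  obtain ⟨L, M, hL0, hLs, hM1, hM2, hM3⟩ := hLM
  -- the point y
  have h0 := fun m => dig_nonneg (N := N) (L := L) (M := M) hβ hx m
  have hdb := fun m => dig_le (N := N) (L := L) (M := M) hβ hx m
  have htl : ∀ n, tl β (dig β x N L M) n ∈ Ioc (0:ℝ) 1 := fun n =>
    ⟨tl_pos hβ hx hL0 hLs hM2 n, tl_le_one hβ hx hL0 hLs hE hK n⟩
  set y : ℝ := tl β (dig β x N L M) 0 with hydef
  have hy : y ∈ Ioc (0:ℝ) 1 := htl 0
  have horb : ∀ n, (Tbeta β)^[n] y = tl β (dig β x N L M) n := tl_orbit hβ h0 hdb htl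
  have heps : ∀ n, eps β y n = dig β x N L M n := tl_eps hβ h0 hdb htl
  have hyIn : y ∈ In β x N := by
    refine ⟨hy, fun j hj => ?_⟩
    rw [heps j, dig_lt_N hL0 j hj]
  refine ⟨y, hyIn, hy, ?_⟩
  -- length bounds
  have hlenlow : ∀ n, (β⁻¹)^n * tl β (dig β x N L M) n ≤ len (In β y n) := by
    intro n
    have := len_In_lower hβ y hy n
    rwa [horb n] at this
  have hlenpos : ∀ n, 0 < len (In β y n) := by
    intro n
    calc (0:ℝ) < (β⁻¹)^n * tl β (dig β x N L M) n := by
          have := (htl n).1; positivity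
    _ ≤ len (In β y n) := hlenlow n
  -- upper bound for -logb len via next nonzero digit
  have hterm_le : ∀ n q : ℕ, n ≤ q → 1 ≤ dig β x N L M q →
      -Real.logb β (len (In β y n)) ≤ (q:ℝ) + 1 := by
    intro n q hnq hq
    have h1 : (β⁻¹)^(q+1) ≤ len (In β y n) := by
      have h2 := tl_ge_single hβ h0 hdb n q hnq
      have h3 : (1:ℝ) * (β⁻¹)^(q-n+1) ≤ (dig β x N L M q : ℝ) * (β⁻¹)^(q-n+1) := by
        apply mul_le_mul_of_nonneg_right _ (by positivity)
        exact_mod_cast hq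
      have h4 : (β⁻¹)^n * (β⁻¹)^(q-n+1) = (β⁻¹)^(q+1) := by
        rw [← pow_add]
        congr 1
        omega
      calc (β⁻¹)^(q+1) = (β⁻¹)^n * (β⁻¹)^(q-n+1) := h4.symm
      _ ≤ (β⁻¹)^n * tl β (dig β x N L M) n := by
          apply mul_le_mul_of_nonneg_left _ (by positivity)
          linarith
      _ ≤ len (In β y n) := hlenlow n
    have h5 := neg_logb_mono hβ (by positivity : (0:ℝ) < (β⁻¹)^(q+1)) h1
    rw [logb_inv_pow hβ (q+1)] at h5
    push_cast at h5 ⊢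
    linarith
  -- lower bound for -logb len at block ends
  have hterm_ge : ∀ i, ((L i + M i : ℕ) : ℝ) + (tseq β (M i) : ℝ) ≤
      -Real.logb β (len (In β y (L i + M i))) := by
    intro i
    set n := L i + M i with hn
    have hc1 : ∀ z ∈ In β y n, (Tbeta β)^[n] z ≤ (Tbeta β)^[M i] 1 := by
      intro z hz
      apply suffix_le hβ z hz.1 (L i) (M i)
      intro j hj
      have h1 : eps β z (L i + j) = eps β y (L i + j) := hz.2 (L i + j) (by omega)
      rw [h1, heps, dig_estar hL0 hLs i j hj]
    have h2 := len_In_upper hβ y n ((Tbeta β)^[M i] 1)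
      (le_of_lt (iter_mem hβ 1 one_mem (M i)).1) hc1
    have h3 : len (In β y n) ≤ (β⁻¹)^(n + tseq β (M i)) := by
      calc len (In β y n) ≤ (β⁻¹)^n * (Tbeta β)^[M i] 1 := h2
      _ ≤ (β⁻¹)^n * (β⁻¹)^(tseq β (M i)) := by
          apply mul_le_mul_of_nonneg_left (T1_le hβ (M i)) (by positivity)
      _ = (β⁻¹)^(n + tseq β (M i)) := by rw [← pow_add]
    have h5 := neg_logb_mono hβ (hlenpos n) h3
    rw [logb_inv_pow hβ (n + tseq β (M i))] at h5
    push_cast at h5 ⊢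
    linarith
  -- conclude via limsup
  rw [upperD]
  apply limsup_eq_of
  · -- eventual upper bound
    intro ε hε
    obtain ⟨R, hR⟩ := ht_small hβ hlam (ε/2) (by positivity)
    set CR : ℕ := Finset.sup (Finset.range R) (tseq β) with hCRdef
    have hCR : ∀ k : ℕ, (tseq β k : ℝ) ≤ (lam β + ε/2) * k + CR := by
      intro k
      rcases Nat.lt_or_ge k R with h|h
      · have h1 : tseq β k ≤ CR := Finset.le_sup (Finset.mem_range.2 h)
        have h1' : (tseq β k : ℝ) ≤ (CR : ℝ) := by exact_mod_cast h1
        have h2 : (0:ℝ) ≤ (lam β + ε/2) * k := by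
          apply mul_le_mul_of_nonneg_left (Nat.cast_nonneg k) (by linarith) |>.trans_eq' (by ring)
        linarith
      · have h3 := hR k h
        have h4 : (0:ℝ) ≤ (CR : ℝ) := Nat.cast_nonneg _
        linarith
    have hlamnn : (0:ℝ) ≤ lam β + ε/2 := by linarith
    have hgap : ∀ n : ℕ, L 0 ≤ n → ∃ q : ℕ, n ≤ q ∧ 1 ≤ dig β x N L M q ∧
        (q:ℝ) ≤ (n:ℝ) + ((lam β + ε/2) * n + CR) + 1 + E := by
      intro n hn
      obtain ⟨i, r, hnr, hrlt⟩ := dig_cases hL0 hLs n hn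
      have hEnn : (0:ℝ) ≤ 1 + (E:ℝ) := by positivity
      have hrn : (r : ℝ) ≤ (n : ℝ) := by exact_mod_cast (by omega : r ≤ n)
      have hmono : ∀ a b : ℕ, a ≤ b → (lam β + ε/2) * a ≤ (lam β + ε/2) * b := by
        intro a b hab
        apply mul_le_mul_of_nonneg_left _ hlamnn
        exact_mod_cast hab
      rcases Nat.lt_or_ge r (M i) with hr|hr
      · rcases Nat.lt_or_ge (r + tseq β r) (M i) with h2|h2
        · refine ⟨L i + (r + tseq β r), by omega, ?_, ?_⟩
          · rw [dig_estar hL0 hLs i _ h2]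
            have ha := eps_nonneg hβ 1 one_mem (r + tseq β r)
            have hb' := tseq_nonzero hβ r
            omega
          · have hq : (L i + (r + tseq β r) : ℕ) = n + tseq β r := by omega
            have h3 := hCR r
            have h4 := hmono r n (by omega)
            rw [hq]
            push_cast
            linarith
        · refine ⟨L (i+1), by rw [hLs]; omega, ?_, ?_⟩
          · have hd : dig β x N L M (L (i+1)) = eps β 1 0 := by
              have := dig_estar (x := x) hL0 hLs (i+1) 0 (by have := hM2 (i+1); omega)
              simpa using this
            rw [hd]; exact eps_one_zero_ge_one hβ
          · obtain ⟨u, hu⟩ : ∃ u, M i = r + u := ⟨M i - r, by omega⟩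
            have htr : u + tseq β (M i) ≤ tseq β r := by
              apply tseq_max hβ
              intro j hj
              rcases Nat.lt_or_ge j u with hj2|hj2
              · exact tseq_zeros hβ r j (by omega)
              · have hz := tseq_zeros hβ (M i) (r + j - M i) (by omega)
                rwa [show M i + (r + j - M i) = r + j by omega] at hz
            have h5 : (L (i+1) : ℕ) = n + (u + tseq β (M i)) + 1 + E := by
              rw [hLs]; omega
            have h6 := hCR r
            have h4 := hmono r n (by omega)
            have h7 : ((u : ℝ) + (tseq β (M i) : ℝ)) ≤ (tseq β r : ℝ) := by
              exact_mod_cast htr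
            rw [h5]
            push_cast
            linarith
      · refine ⟨L (i+1), by rw [hLs]; omega, ?_, ?_⟩
        · have hd : dig β x N L M (L (i+1)) = eps β 1 0 := by
            have := dig_estar (x := x) hL0 hLs (i+1) 0 (by have := hM2 (i+1); omega)
            simpa using this
          rw [hd]; exact eps_one_zero_ge_one hβ
        · have h5 : (L (i+1) : ℕ) ≤ n + tseq β (M i) + 1 + E := by
            rw [hLs]; omega
          have h6 := hCR (M i)
          have h4 := hmono (M i) n (by omega)
          have h5' : ((L (i+1)) : ℝ) ≤ (n : ℝ) + (tseq β (M i) : ℝ) + 1 + E := by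
            exact_mod_cast h5
          linarith
    obtain ⟨n1, hn1⟩ := exists_nat_gt (((CR : ℝ) + 2 + E) / (ε/2))
    rw [Filter.eventually_atTop]
    refine ⟨max (max (L 0) n1) 1, ?_⟩
    intro n hn
    have hnL0 : L 0 ≤ n := le_trans (le_trans (le_max_left _ _) (le_max_left _ _)) hn
    have hnn1 : n1 ≤ n := le_trans (le_trans (le_max_right _ _) (le_max_left _ _)) hn
    have hn1' : 1 ≤ n := le_trans (le_max_right _ _) hn
    have hnpos : (0:ℝ) < n := by exact_mod_cast hn1'
    obtain ⟨q, hq1, hq2, hq3⟩ := hgap n hnL0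
    have h7 := hterm_le n q hq1 hq2
    show -Real.logb β (len (In β y n)) / n ≤ 1 + lam β + ε
    have h8 : -Real.logb β (len (In β y n)) / n ≤ ((q:ℝ)+1)/n :=
      div_le_div_of_nonneg_right h7 (le_of_lt hnpos)
    have h9 : ((q:ℝ)+1) ≤ (1 + (lam β + ε/2)) * n + ((CR:ℝ) + 2 + E) := by
      push_cast at hq3 ⊢
      linarith
    have h10 : ((CR:ℝ) + 2 + E) ≤ (ε/2) * n := by
      rw [div_lt_iff₀ (by positivity)] at hn1
      have h10a : (n1 : ℝ) ≤ (n : ℝ) := by exact_mod_cast hnn1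
      have h10b : (n1:ℝ) * (ε/2) ≤ (n:ℝ) * (ε/2) :=
        mul_le_mul_of_nonneg_right h10a (by positivity)
      linarith
    have h11 : ((q:ℝ)+1)/n ≤ 1 + lam β + ε := by
      rw [div_le_iff₀ hnpos]
      linarith
    linarith
  · -- frequent lower bound
    intro ε hε
    rw [Filter.frequently_atTop]
    intro n₀
    obtain ⟨i1, hi1⟩ := exists_nat_gt ((lam β + 1)/ε)
    obtain ⟨i2, hi2⟩ := exists_nat_gt (1/(lam β))
    set i := max n₀ (max i1 i2) with hidef
    have hii1 : i1 ≤ i := le_trans (le_max_left _ _) (le_max_right _ _)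
    have hii2 : i2 ≤ i := le_trans (le_max_right _ _) (le_max_right _ _)
    set n := L i + M i with hndef
    have hn₀ : n₀ ≤ n := by
      have h1 : i ≤ L i := le_trans (by omega) (L_ge hLs i)
      have h2 : n₀ ≤ i := le_max_left _ _
      omega
    refine ⟨n, hn₀, ?_⟩
    show 1 + lam β - ε ≤ -Real.logb β (len (In β y n)) / n
    have hge := hterm_ge i
    have hn1 : 1 ≤ n := by have := hM2 i; omega
    have hnpos : (0:ℝ) < n := by exact_mod_cast Nat.lt_of_lt_of_le Nat.zero_lt_one hn1
    -- key: (lam β - ε) * n ≤ tseq β (M i)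
    have hkey : (lam β - ε) * (n:ℝ) ≤ (tseq β (M i) : ℝ) := by
      rcases le_or_gt (lam β) ε with hle|hlt
      · have h1 : (lam β - ε) * (n:ℝ) ≤ 0 :=
          mul_nonpos_of_nonpos_of_nonneg (by linarith) (le_of_lt hnpos)
        have h2 : (0:ℝ) ≤ (tseq β (M i) : ℝ) := Nat.cast_nonneg _
        linarith
      · -- ε < lam β
        have h3 := hM3 i
        have hMn : (i+1) * (L i + M i) ≤ (i+2) * M i := by
          have h := hM1 i
          calc (i+1) * (L i + M i) = (i+1) * L i + (i+1) * M i := by ring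
          _ ≤ M i + (i+1) * M i := by omega
          _ = (i+2) * M i := by ring
        have hMnR : ((i:ℝ)+1) * (n:ℝ) ≤ ((i:ℝ)+2) * (M i : ℝ) := by
          exact_mod_cast hMn
        have hd1 : (1:ℝ)/(i+1) ≤ lam β := by
          have hi2R : 1/(lam β) < (i2:ℝ) := hi2
          have hi2i : (i2:ℝ) ≤ (i:ℝ) := by exact_mod_cast hii2
          rw [div_le_iff₀ (by positivity)]
          rw [div_lt_iff₀ hlam] at hi2R
          have hm := mul_le_mul_of_nonneg_right (show (i2:ℝ) ≤ (i:ℝ)+1 by linarith)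
            (le_of_lt hlam)
          linarith [mul_comm (lam β) ((i:ℝ)+1)]
        have hεi : lam β + 1 ≤ ε * ((i:ℝ)+2) := by
          have hi1R : (lam β + 1)/ε < (i1:ℝ) := hi1
          have hi1i : (i1:ℝ) ≤ (i:ℝ) := by exact_mod_cast hii1
          rw [div_lt_iff₀ hε] at hi1R
          have hm := mul_le_mul_of_nonneg_right (show (i1:ℝ) ≤ (i:ℝ)+2 by linarith)
            (le_of_lt hε)
          linarith [mul_comm ε ((i:ℝ)+2)]
        -- (lam - ε)(i+2) ≤ (lam - 1/(i+1))(i+1)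
        have hcomp : (lam β - ε) * ((i:ℝ)+2) ≤ (lam β - 1/(i+1)) * ((i:ℝ)+1) := by
          have h4 : (1/((i:ℝ)+1)) * ((i:ℝ)+1) = 1 := by
            field_simp
          have h4b : (lam β - 1/(i+1)) * ((i:ℝ)+1) - (lam β - ε) * ((i:ℝ)+2)
              = ε*((i:ℝ)+2) - lam β - (1/((i:ℝ)+1)) * ((i:ℝ)+1) := by ring
          rw [h4] at h4b
          linarith
        have hδnn : (0:ℝ) ≤ lam β - 1/(i+1) := by linarith
        have hεnn : (0:ℝ) ≤ lam β - ε := by linarith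
        have hMnn : (0:ℝ) ≤ (M i : ℝ) := Nat.cast_nonneg _
        -- multiply out
        have hchain : (lam β - ε) * (((i:ℝ)+1) * (n:ℝ)) ≤ ((i:ℝ)+1) * (tseq β (M i) : ℝ) := by
          calc (lam β - ε) * (((i:ℝ)+1) * (n:ℝ)) ≤ (lam β - ε) * (((i:ℝ)+2) * (M i:ℝ)) :=
                mul_le_mul_of_nonneg_left hMnR hεnn
          _ = ((lam β - ε) * ((i:ℝ)+2)) * (M i:ℝ) := by ring
          _ ≤ ((lam β - 1/(i+1)) * ((i:ℝ)+1)) * (M i:ℝ) :=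
                mul_le_mul_of_nonneg_right hcomp hMnn
          _ = ((i:ℝ)+1) * ((lam β - 1/(i+1)) * (M i:ℝ)) := by ring
          _ ≤ ((i:ℝ)+1) * (tseq β (M i) : ℝ) :=
                mul_le_mul_of_nonneg_left h3 (by positivity)
        have hip : (0:ℝ) < (i:ℝ)+1 := by positivity
        have hchain2 : ((i:ℝ)+1) * ((lam β - ε) * (n:ℝ)) ≤ ((i:ℝ)+1) * (tseq β (M i):ℝ) := by
          rw [show ((i:ℝ)+1) * ((lam β - ε) * (n:ℝ)) = (lam β - ε) * (((i:ℝ)+1) * (n:ℝ)) by ring]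
          exact hchain
        exact le_of_mul_le_mul_left hchain2 hip
    -- conclude
    have h12 : ((n:ℝ) + (tseq β (M i):ℝ)) / n ≤ -Real.logb β (len (In β y n)) / n := by
      apply div_le_div_of_nonneg_right _ (le_of_lt hnpos)
      have hne : (n:ℝ) = (L i : ℝ) + (M i : ℝ) := by
        rw [hndef]; push_cast; ring
      push_cast at hge ⊢
      rw [hne]
      linarith
    have h13 : 1 + lam β - ε ≤ ((n:ℝ) + (tseq β (M i):ℝ)) / n := by
      rw [le_div_iff₀ hnpos]
      have h13a : (1 + lam β - ε) * (n:ℝ) = (n:ℝ) + (lam β - ε) * (n:ℝ) := by ring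
      linarith
    linarith

end MainExists

lemma In_diam (β : ℝ) (hβ : 1 < β) (x : ℝ) (hx : x ∈ Ioc (0:ℝ) 1) (N : ℕ)
    (y : ℝ) (hy : y ∈ In β x N) : |x - y| ≤ (β⁻¹)^N := by
  have hc : ∀ z ∈ In β x N, (Tbeta β)^[N] z ≤ 1 := fun z hz => (iter_mem hβ z hz.1 N).2
  have hsub := In_subset_Ioc hβ x N 1 hc
  have hxIn : x ∈ In β x N := ⟨hx, fun j _ => rfl⟩
  have h1 := hsub hxIn
  have h2 := hsub hy
  rw [abs_le]
  obtain ⟨h1a, h1b⟩ := h1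
  obtain ⟨h2a, h2b⟩ := h2
  rw [mul_one] at h1b h2b
  constructor <;> linarith

/-- If `λ(β) > 0`, the extremely irregular set
`E = {x ∈ (0,1] : limsup (−log_β |I_n(x)|)/n = 1 + λ(β)}` is dense in `[0,1]`:
its closure equals `[0,1]`. -/
theorem extremely_irregular_dense (β : ℝ) (hβ : 1 < β) (hlam : 0 < lam β) :
    closure {x ∈ Ioc (0:ℝ) 1 | upperD β x = 1 + lam β} = Icc (0:ℝ) 1 := by
  have hb0 : (0:ℝ) < β := lt_trans one_pos hβ
  apply Set.Subset.antisymm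
  · apply closure_minimal _ isClosed_Icc
    intro z hz
    exact ⟨le_of_lt hz.1.1, hz.1.2⟩
  · intro z hz
    rw [Metric.mem_closure_iff]
    intro δ hδ
    -- pick x close to z in (0,1]
    obtain ⟨x, hx, hzx⟩ : ∃ x, x ∈ Ioc (0:ℝ) 1 ∧ |z - x| < δ/2 := by
      rcases eq_or_lt_of_le hz.1 with h|h
      · refine ⟨min (δ/4) 1, ⟨by positivity, min_le_right _ _⟩, ?_⟩
        rw [← h]
        have h1 : min (δ/4) 1 ≤ δ/4 := min_le_left _ _
        have h2 : (0:ℝ) < min (δ/4) 1 := by positivity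
        rw [abs_sub_comm, abs_of_pos (by linarith)]
        linarith
      · exact ⟨z, ⟨h, hz.2⟩, by simp [hδ]⟩
    obtain ⟨N, hN⟩ := exists_pow_lt_of_lt_one (show (0:ℝ) < δ/2 by linarith) (inv_lt_one'' hβ)
    obtain ⟨y, hyIn, hy, hyD⟩ := main_exists β hβ hlam x hx N
    refine ⟨y, ⟨hy, hyD⟩, ?_⟩
    have h3 := In_diam β hβ x hx N y hyIn
    have h4 : dist z y ≤ |z - x| + |x - y| := by
      rw [Real.dist_eq]
      have := abs_sub_le z x y
      linarith
    calc dist z y ≤ |z - x| + |x - y| := h4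
    _ < δ/2 + δ/2 := by have := lt_of_le_of_lt h3 hN; linarith
    _ = δ := by ring
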